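/- Let δ ∈ [0,1] and let A be a d×d complex matrix with a singular value decomposition A = U·Σ·V† in which every diagonal entry of Σ lies in the interval [1−δ, 1]. Set B = U·√(I−Σ²)·V†, where the square root is applied entrywise to the diagonal. Then the 2d×2d block matrix A₀ = [[A, −B],[B, A]] (i.e., A₀ = |0⟩⟨0|⊗A − |0⟩⟨1|⊗B + |1⟩⟨0|⊗B + |1⟩⟨1|⊗A) is unitary, and for every unit vector φ ∈ ℂ^d one has ‖|0⟩⊗(Aφ) − A₀(|0⟩⊗φ)‖ ≤ √(2δ) and ‖|0⟩⊗(A†φ) − A₀†(|0⟩⊗φ)‖ ≤ √(2δ), where |0⟩ denotes the first standard basis vector of ℂ² and ‖·‖ is the Euclidean norm. -/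

import Mathlib

open scoped Matrix Kronecker ComplexOrder

/-- The operator (spectral) norm of a square complex matrix. -/
noncomputable def opNorm {n : Type*} [Fintype n] [DecidableEq n] (A : Matrix n n ℂ) : ℝ :=
  ‖Matrix.toEuclideanCLM (𝕜 := ℂ) A‖

/-- The positive semidefinite square root of a positive semidefinite matrix
(Mathlib's former `Matrix.PosSemidef.sqrt`, removed since; restored with its old definition). -/
noncomputable def Matrix.PosSemidef.sqrt {n 𝕜 : Type*} [Fintype n] [RCLike 𝕜] [DecidableEq n]
    {A : Matrix n n 𝕜} (hA : A.PosSemidef) : Matrix n n 𝕜 :=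
  (hA.1.eigenvectorUnitary : Matrix n n 𝕜) *
    Matrix.diagonal ((↑) ∘ (Real.sqrt ·) ∘ hA.1.eigenvalues) *
    (star hA.1.eigenvectorUnitary : Matrix n n 𝕜)

/-- The trace norm `‖A‖₁ = Tr √(Aᴴ A)` of a square complex matrix. -/
noncomputable def traceNorm {n : Type*} [Fintype n] [DecidableEq n] (A : Matrix n n ℂ) : ℝ :=
  ((Matrix.posSemidef_conjTranspose_mul_self A).sqrt.trace).re

/-- The (square-root) fidelity `F(ρ,σ) = ‖√ρ √σ‖₁` of positive semidefinite matrices. -/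
noncomputable def fidelity {n : Type*} [Fintype n] [DecidableEq n] {ρ σ : Matrix n n ℂ}
    (hρ : ρ.PosSemidef) (hσ : σ.PosSemidef) : ℝ :=
  traceNorm (hρ.sqrt * hσ.sqrt)

/-- Functional calculus for a Hermitian matrix: `f(A) = Σ_i f(λ_i) |v_i⟩⟨v_i|`. -/
noncomputable def matFun {n : Type*} [Fintype n] [DecidableEq n] {A : Matrix n n ℂ}
    (hA : A.IsHermitian) (f : ℝ → ℝ) : Matrix n n ℂ :=
  (hA.eigenvectorUnitary : Matrix n n ℂ) *
    Matrix.diagonal (fun i => (f (hA.eigenvalues i) : ℂ)) *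
    (star (hA.eigenvectorUnitary : Matrix n n ℂ))

/-- Partial trace over the first tensor factor. -/
noncomputable def ptraceA {a b : Type*} [Fintype a] (X : Matrix (a × b) (a × b) ℂ) :
    Matrix b b ℂ :=
  Matrix.of fun i j => ∑ k, X (k, i) (k, j)

/-- Partial trace over the second tensor factor. -/
noncomputable def ptraceB {a b : Type*} [Fintype b] (X : Matrix (a × b) (a × b) ℂ) :
    Matrix a a ℂ :=
  Matrix.of fun i j => ∑ k, X (i, k) (j, k)

/-- The outer product `|ψ⟩⟨φ|`. -/
def outer {a : Type*} (ψ φ : a → ℂ) : Matrix a a ℂ :=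
  Matrix.of fun i j => ψ i * (starRingEnd ℂ) (φ j)

/-- The Euclidean norm of a finitely supported complex vector. -/
noncomputable def evnorm {a : Type*} [Fintype a] (v : a → ℂ) : ℝ :=
  Real.sqrt (∑ i, ‖v i‖ ^ 2)

lemma dot_self_eq {n : Type*} [Fintype n] (v : n → ℂ) :
    star v ⬝ᵥ v = ((∑ i, ‖v i‖^2 : ℝ) : ℂ) := by
  simp [dotProduct, Complex.conj_mul', Complex.ofReal_sum]

lemma sum_sq_mulVec_unitary {n : Type*} [Fintype n] [DecidableEq n]
    {U : Matrix n n ℂ} (hU : U ∈ Matrix.unitaryGroup n ℂ) (w : n → ℂ) :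
    ∑ i, ‖(U *ᵥ w) i‖^2 = ∑ i, ‖w i‖^2 := by
  have h : star (U *ᵥ w) ⬝ᵥ (U *ᵥ w) = star w ⬝ᵥ w := by
    rw [Matrix.star_mulVec, Matrix.dotProduct_mulVec, Matrix.vecMul_vecMul,
      ← Matrix.star_eq_conjTranspose, hU.1, Matrix.vecMul_one]
  have := (dot_self_eq (U *ᵥ w)).symm.trans (h.trans (dot_self_eq w))
  exact_mod_cast Complex.ofReal_inj.mp this

lemma diag_real_ct {n : Type*} [Fintype n] [DecidableEq n] (c : n → ℝ) :
    (Matrix.diagonal (fun i => (c i : ℂ)))ᴴ = Matrix.diagonal (fun i => (c i : ℂ)) := by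
  rw [Matrix.diagonal_conjTranspose]
  ext i j
  by_cases h : i = j <;> simp [Matrix.diagonal_apply, h, Complex.conj_ofReal]

lemma svd_mulVec_bound {d : ℕ} (δ : ℝ) {W₁ W₂ : Matrix (Fin d) (Fin d) ℂ}
    (hW₁ : W₁ ∈ Matrix.unitaryGroup (Fin d) ℂ) (hW₂ : W₂ ∈ Matrix.unitaryGroup (Fin d) ℂ)
    (e : Fin d → ℝ) (he : ∀ i, (e i)^2 ≤ 2*δ) (φ : Fin d → ℂ) (hφ : ∑ i, ‖φ i‖^2 = 1) :
    ∑ i, ‖((W₁ * Matrix.diagonal (fun i => (e i : ℂ)) * W₂ᴴ) *ᵥ φ) i‖^2 ≤ 2*δ := by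
  have h2 : W₂ᴴ ∈ Matrix.unitaryGroup (Fin d) ℂ := by
    rw [← Matrix.star_eq_conjTranspose]; exact Unitary.star_mem hW₂
  rw [← Matrix.mulVec_mulVec, ← Matrix.mulVec_mulVec, sum_sq_mulVec_unitary hW₁]
  set ψ := W₂ᴴ *ᵥ φ with hψ
  have hψn : ∑ i, ‖ψ i‖^2 = 1 := by rw [hψ, sum_sq_mulVec_unitary h2, hφ]
  calc ∑ i, ‖(Matrix.diagonal (fun i => (e i : ℂ)) *ᵥ ψ) i‖^2
      = ∑ i, (e i)^2 * ‖ψ i‖^2 := by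
        refine Finset.sum_congr rfl fun i _ => ?_
        rw [Matrix.mulVec_diagonal, norm_mul, mul_pow, Complex.norm_real,
          Real.norm_eq_abs, sq_abs]
    _ ≤ ∑ i, (2*δ) * ‖ψ i‖^2 := by
        refine Finset.sum_le_sum fun i _ => ?_
        exact mul_le_mul_of_nonneg_right (he i) (by positivity)
    _ = 2*δ := by rw [← Finset.mul_sum, hψn, mul_one]

lemma sandwich_mul {d : ℕ} {U V : Matrix (Fin d) (Fin d) ℂ}
    (hU : U ∈ Matrix.unitaryGroup (Fin d) ℂ) (c c' : Fin d → ℝ) :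
    (U * Matrix.diagonal (fun i => (c i : ℂ)) * Vᴴ)ᴴ *
      (U * Matrix.diagonal (fun i => (c' i : ℂ)) * Vᴴ) =
    V * Matrix.diagonal (fun i => ((c i * c' i : ℝ) : ℂ)) * Vᴴ := by
  have hUU : Uᴴ * U = 1 := by rw [← Matrix.star_eq_conjTranspose]; exact hU.1
  simp only [Matrix.conjTranspose_mul, Matrix.conjTranspose_conjTranspose, diag_real_ct,
    Matrix.mul_assoc]
  rw [← Matrix.mul_assoc Uᴴ U, hUU, Matrix.one_mul,
    ← Matrix.mul_assoc (Matrix.diagonal _), Matrix.diagonal_mul_diagonal]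
  push_cast
  rfl

set_option maxHeartbeats 1000000 in
/-- Embedding an almost-unitary matrix into a unitary: if the singular values of `A = U Σ V†`
lie in `[1−δ, 1]` and `B = U √(I−Σ²) V†`, then `A₀ = [[A, −B],[B, A]]` is unitary and, for every
unit vector `φ`, `‖|0⟩⊗(Aφ) − A₀(|0⟩⊗φ)‖ ≤ √(2δ)` and `‖|0⟩⊗(A†φ) − A₀†(|0⟩⊗φ)‖ ≤ √(2δ)`. -/
theorem almost_unitary_embedding (d : ℕ) (δ : ℝ) (hδ0 : 0 ≤ δ) (hδ1 : δ ≤ 1)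
    (A U V : Matrix (Fin d) (Fin d) ℂ)
    (hU : U ∈ Matrix.unitaryGroup (Fin d) ℂ) (hV : V ∈ Matrix.unitaryGroup (Fin d) ℂ)
    (s : Fin d → ℝ) (hs1 : ∀ i, 1 - δ ≤ s i) (hs2 : ∀ i, s i ≤ 1)
    (hSVD : A = U * Matrix.diagonal (fun i => (s i : ℂ)) * Vᴴ)
    (B : Matrix (Fin d) (Fin d) ℂ)
    (hB : B = U * Matrix.diagonal (fun i => (Complex.ofReal (Real.sqrt (1 - s i ^ 2)))) * Vᴴ)
    (A₀ : Matrix (Fin d ⊕ Fin d) (Fin d ⊕ Fin d) ℂ)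
    (hA₀ : A₀ = Matrix.fromBlocks A (-B) B A) :
    A₀ ∈ Matrix.unitaryGroup (Fin d ⊕ Fin d) ℂ ∧
      ∀ φ : Fin d → ℂ, evnorm φ = 1 →
        evnorm (Sum.elim (A *ᵥ φ) 0 - A₀ *ᵥ (Sum.elim φ 0)) ≤ Real.sqrt (2 * δ) ∧
          evnorm (Sum.elim (Aᴴ *ᵥ φ) 0 - A₀ᴴ *ᵥ (Sum.elim φ 0)) ≤ Real.sqrt (2 * δ) := by
  have hs0 : ∀ i, 0 ≤ s i := fun i => by linarith [hs1 i]
  set e : Fin d → ℝ := fun i => Real.sqrt (1 - s i ^ 2) with he'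
  have hsq : ∀ i, e i ^ 2 = 1 - s i ^ 2 := fun i =>
    Real.sq_sqrt (by nlinarith [hs0 i, hs2 i])
  have hle : ∀ i, e i ^ 2 ≤ 2 * δ := fun i => by
    rw [hsq i]; nlinarith [hs1 i, hs0 i]
  have hB' : B = U * Matrix.diagonal (fun i => (e i : ℂ)) * Vᴴ := hB
  have hVV : V * Vᴴ = 1 := by rw [← Matrix.star_eq_conjTranspose]; exact hV.2
  -- key algebra
  have hAA : Aᴴ * A + Bᴴ * B = 1 := by
    rw [hSVD, hB', sandwich_mul hU, sandwich_mul hU, ← Matrix.add_mul, ← Matrix.mul_add,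
      Matrix.diagonal_add]
    have : (fun i => ((s i * s i : ℝ) : ℂ) + ((e i * e i : ℝ) : ℂ)) = fun _ => (1 : ℂ) := by
      funext i
      have h1 : s i * s i + e i * e i = 1 := by
        have := hsq i; nlinarith
      push_cast
      exact_mod_cast congrArg (Complex.ofReal) h1
    rw [this, Matrix.diagonal_one, Matrix.mul_one, hVV]
  have hAB : Aᴴ * B = Bᴴ * A := by
    rw [hSVD, hB', sandwich_mul hU, sandwich_mul hU]
    have : (fun i => ((s i * e i : ℝ) : ℂ)) = fun i => ((e i * s i : ℝ) : ℂ) := by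
      funext i; rw [mul_comm]
    rw [this]
  constructor
  · rw [Matrix.mem_unitaryGroup_iff', Matrix.star_eq_conjTranspose, hA₀,
      Matrix.fromBlocks_conjTranspose, Matrix.fromBlocks_multiply, ← Matrix.fromBlocks_one]
    have h12 : Aᴴ * (-B) + Bᴴ * A = 0 := by rw [Matrix.mul_neg, hAB]; abel
    have h21 : (-B)ᴴ * A + Aᴴ * B = 0 := by
      rw [Matrix.conjTranspose_neg, Matrix.neg_mul, hAB]; abel
    have h22 : (-B)ᴴ * (-B) + Aᴴ * A = 1 := by
      rw [Matrix.conjTranspose_neg, Matrix.mul_neg, Matrix.neg_mul, neg_neg, add_comm]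
      exact hAA
    rw [hAA, h12, h21, h22]
  · intro φ hφ
    have hφ2 : ∑ i, ‖φ i‖^2 = 1 := by
      have h0 : (0:ℝ) ≤ ∑ i, ‖φ i‖^2 := Finset.sum_nonneg fun i _ => sq_nonneg _
      have h1 : Real.sqrt (∑ i, ‖φ i‖^2) = 1 := hφ
      nlinarith [Real.sq_sqrt h0]
    constructor
    · have hmv : A₀ *ᵥ Sum.elim φ 0 = Sum.elim (A *ᵥ φ) (B *ᵥ φ) := by
        rw [hA₀, Matrix.fromBlocks_mulVec]
        simp [Matrix.mulVec_zero]
      have hdiff : Sum.elim (A *ᵥ φ) (0 : Fin d → ℂ) - Sum.elim (A *ᵥ φ) (B *ᵥ φ)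
          = Sum.elim (0 : Fin d → ℂ) (-(B *ᵥ φ)) := by
        funext x; cases x <;> simp
      rw [hmv, hdiff]
      unfold evnorm
      rw [Fintype.sum_sum_type]
      simp only [Sum.elim_inl, Sum.elim_inr, Pi.zero_apply, norm_zero, norm_neg,
        Pi.neg_apply, zero_pow, Finset.sum_const_zero, zero_add]
      apply Real.sqrt_le_sqrt
      rw [hB']
      simpa using svd_mulVec_bound δ hU hV e hle φ hφ2
    · have hBH : Bᴴ = V * Matrix.diagonal (fun i => (e i : ℂ)) * Uᴴ := by
        rw [hB']
        simp only [Matrix.conjTranspose_mul, Matrix.conjTranspose_conjTranspose,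
          diag_real_ct, Matrix.mul_assoc]
      have hmv : A₀ᴴ *ᵥ Sum.elim φ 0 = Sum.elim (Aᴴ *ᵥ φ) (-(Bᴴ *ᵥ φ)) := by
        rw [hA₀, Matrix.fromBlocks_conjTranspose, Matrix.fromBlocks_mulVec]
        simp [Matrix.mulVec_zero, Matrix.neg_mulVec]
      have hdiff : Sum.elim (Aᴴ *ᵥ φ) (0 : Fin d → ℂ) - Sum.elim (Aᴴ *ᵥ φ) (-(Bᴴ *ᵥ φ))
          = Sum.elim (0 : Fin d → ℂ) (Bᴴ *ᵥ φ) := by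
        funext x; cases x <;> simp
      rw [hmv, hdiff]
      unfold evnorm
      rw [Fintype.sum_sum_type]
      simp only [Sum.elim_inl, Sum.elim_inr, Pi.zero_apply, norm_zero,
        zero_pow, Finset.sum_const_zero, zero_add]
      apply Real.sqrt_le_sqrt
      rw [hBH]
      simpa using svd_mulVec_bound δ hV hU e hle φ hφ2
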